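/- Let f : |P| → |Q| be a weak morphism of precubical sets that is a homeomorphism, and A ⊆ Q a precubical subset. If no element of c(A) is broken in A, then A = f(c(A)). -/
import Mathlib


/-- A graded set with boundary operators: the data of a precubical set.
`cell` is the set of all cubes, `deg` the degree, and `d b i x` the face
`dᵢᵇ x`, meaningful for `1 ≤ i ≤ deg x` (`b = false` is `d⁰`, `b = true` is `d¹`). -/
structure PrecubicalSet where
  cell : Type
  deg : cell → ℕ
  d : Bool → ℕ → cell → cell

/-- `P` is a genuine precubical set: faces lower degree by one and the
precubical relations `dᵢᵏ ∘ dⱼˡ = dⱼ₋₁ˡ ∘ dᵢᵏ` hold for `i < j`. -/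
def PrecubicalSet.IsPrecubical (P : PrecubicalSet) : Prop :=
  (∀ (b : Bool) (i : ℕ) (x : P.cell), 1 ≤ i → i ≤ P.deg x →
      P.deg (P.d b i x) = P.deg x - 1) ∧
  (∀ (b b' : Bool) (i j : ℕ) (x : P.cell), 1 ≤ i → i < j → j ≤ P.deg x →
      P.d b i (P.d b' j x) = P.d b' (j - 1) (P.d b i x))

/-- A precubical subset: a graded subset stable under the boundary operators. -/
def PrecubicalSet.IsSub (P : PrecubicalSet) (X : Set P.cell) : Prop :=
  ∀ (b : Bool) (i : ℕ) (x : P.cell), 1 ≤ i → i ≤ P.deg x → x ∈ X → P.d b i x ∈ X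

/-- A morphism of precubical sets: a degree-preserving map commuting with the
boundary operators (on their meaningful range of indices). -/
structure PrecubicalHom (P Q : PrecubicalSet) where
  map : P.cell → Q.cell
  deg_map : ∀ x, Q.deg (map x) = P.deg x
  d_map : ∀ (b : Bool) (i : ℕ) (x : P.cell), 1 ≤ i → i ≤ P.deg x →
    map (P.d b i x) = Q.d b i (map x)
open CategoryTheory

noncomputable section
open scoped Classical DirectSum

instance (P : PrecubicalSet) : TopologicalSpace P.cell := ⊥

namespace PrecubicalSet

variable (P : PrecubicalSet)

/-- The disjoint union `⨿ₙ Pₙ × [0,1]ⁿ` (cells carry the discrete topology). -/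
def ESpace : Type := Σ x : P.cell, Fin (P.deg x) → unitInterval

instance : TopologicalSpace P.ESpace := by unfold ESpace; infer_instance

/-- The map `δᵢᵇ : [0,1]^m → [0,1]^{m+1}` inserting the coordinate `b` at
position `i` (1-based). -/
def insCoord {m : ℕ} (b : Bool) (i : ℕ) (u : Fin m → unitInterval) :
    Fin (m + 1) → unitInterval :=
  fun j =>
    if (j : ℕ) + 1 < i then (if h : (j : ℕ) < m then u ⟨j, h⟩ else 0)
    else if (j : ℕ) + 1 = i then (if b then 1 else 0)
    else if h : (j : ℕ) - 1 < m then u ⟨(j : ℕ) - 1, h⟩ else 0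

/-- The gluing relation of the geometric realisation:
`(dᵢᵇ x, u) ∼ (x, δᵢᵇ u)`. -/
def RelE : P.ESpace → P.ESpace → Prop := fun a z =>
  ∃ (b : Bool) (i : ℕ), 1 ≤ i ∧ i ≤ P.deg z.1 ∧ a.1 = P.d b i z.1 ∧
    HEq (insCoord b i a.2) z.2

/-- The geometric realisation `|P|` of a precubical set. -/
def GeomReal : Type := Quot P.RelE

instance : TopologicalSpace P.GeomReal := by unfold GeomReal; infer_instance

/-- The point `[x, u]` of `|P|`. -/
def pt (x : P.cell) (u : Fin (P.deg x) → unitInterval) : P.GeomReal :=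
  Quot.mk _ ⟨x, u⟩

end PrecubicalSet

namespace PrecubicalSet

/-- The midpoint `½ ∈ [0,1]`. -/
def half : unitInterval := ⟨1/2, by norm_num⟩

/-- The degree of a cell of the grid: a grid cell assigns to each of the `n`
coordinates either a vertex `j` (`(j, false)`) or an edge `[j, j+1]`
(`(j, true)`); the degree is the number of edge coordinates. -/
def gridDeg {n : ℕ} (c : Fin n → ℕ × Bool) : ℕ :=
  (Finset.univ.filter fun i => (c i).2 = true).card

/-- The boundary operator of the grid: `dₘᵇ` replaces the `m`-th edge
coordinate `[j, j+1]` by the vertex `j` (`b = false`) or `j+1` (`b = true`). -/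
def gridD {n : ℕ} (b : Bool) (m : ℕ) (c : Fin n → ℕ × Bool) : Fin n → ℕ × Bool :=
  fun i =>
    if (c i).2 = true ∧
        (Finset.univ.filter fun i' => (c i').2 = true ∧ i' < i).card + 1 = m
    then ((c i).1 + (if b then 1 else 0), false) else c i

/-- The precubical set `⟦0,k₁⟧ ⊗ ⋯ ⊗ ⟦0,kₙ⟧`. -/
def BoxData {n : ℕ} (k : Fin n → ℕ) : PrecubicalSet where
  cell := {c : Fin n → ℕ × Bool // ∀ i, (c i).1 + (if (c i).2 then 1 else 0) ≤ k i}
  deg := fun c => gridDeg c.1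
  d := fun b m c => ⟨gridD b m c.1, by
    intro i
    dsimp only [gridD]
    split
    · rename_i h
      have h2 := c.2 i
      rw [h.1] at h2
      simp only [if_true] at h2
      cases b <;> simp <;> omega
    · exact c.2 i⟩

/-- The cell of the box `⟦0,k₁⟧ ⊗ ⋯ ⊗ ⟦0,kₙ⟧` in whose relatively open
realisation a point `t ∈ [0,k₁] × ⋯ × [0,kₙ]` lies. -/
noncomputable def cellOf {n : ℕ} (k : Fin n → ℕ)
    (t : ∀ i, Set.Icc (0:ℝ) (k i : ℝ)) : (BoxData k).cell :=
  ⟨fun i => if ((t i : ℝ) = (⌊(t i : ℝ)⌋ : ℤ))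
      then ((⌊(t i : ℝ)⌋).toNat, false) else ((⌊(t i : ℝ)⌋).toNat, true), by
    intro i
    have h1 : ⌊(t i : ℝ)⌋ ≤ (k i : ℤ) := by
      have := Int.floor_mono (t i).2.2
      simpa using this
    have h0 : 0 ≤ ⌊(t i : ℝ)⌋ := Int.floor_nonneg.mpr (t i).2.1
    dsimp only
    split
    · simp only [Bool.false_eq_true, if_false, add_zero]
      omega
    · rename_i h
      have h2 : (t i : ℝ) < (k i : ℝ) := by
        rcases lt_or_eq_of_le (t i).2.2 with h' | h'
        · exact h'
        · exact absurd (by rw [h']; exact_mod_cast (Int.floor_natCast (k i)).symm) h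
      have h3 : ⌊(t i : ℝ)⌋ < (k i : ℤ) := by
        rw [Int.floor_lt]
        exact_mod_cast h2
      simp only [if_true]
      omega⟩

/-- The coordinates of `t` inside the open cell of `cellOf k t`: the fractional
parts of the edge coordinates, in order. -/
noncomputable def uOf {n : ℕ} (k : Fin n → ℕ)
    (t : ∀ i, Set.Icc (0:ℝ) (k i : ℝ)) :
    Fin ((BoxData k).deg (cellOf k t)) → unitInterval :=
  fun m =>
    ⟨Int.fract ((t ((((Finset.univ.filter
          fun i => (((cellOf k t).1 i).2 = true)).orderIsoOfFin rfl) m : _) : Fin n)) : ℝ),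
      Int.fract_nonneg _, (Int.fract_lt_one _).le⟩

variable {P Q : PrecubicalSet}

/-- The image of the point of `|⟦0,k₁⟧ ⊗ ⋯ ⊗ ⟦0,kₙ⟧| = [0,k₁] × ⋯ × [0,kₙ]`
with coordinates `t` under the geometric realisation `|ξ|` of a morphism of
precubical sets `ξ : ⟦0,k₁⟧ ⊗ ⋯ ⊗ ⟦0,kₙ⟧ → P`. -/
noncomputable def realBox {n : ℕ} {k : Fin n → ℕ}
    (ξ : PrecubicalHom (BoxData k) P) (t : ∀ i, Set.Icc (0:ℝ) (k i : ℝ)) :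
    P.GeomReal :=
  P.pt (ξ.map (cellOf k t)) (uOf k t ∘ Fin.cast (ξ.deg_map _))

/-- `f : |P| → |Q|` is a weak morphism of precubical sets: it sends vertices to
vertices, and for every morphism of precubical sets
`ξ : ⟦0,k₁⟧ ⊗ ⋯ ⊗ ⟦0,kₙ⟧ → P` there are a morphism of precubical sets
`χ : ⟦0,l₁⟧ ⊗ ⋯ ⊗ ⟦0,lₙ⟧ → Q` and a dihomeomorphism
`φ : [0,k₁] × ⋯ × [0,kₙ] → [0,l₁] × ⋯ × [0,lₙ]` with `f ∘ |ξ| = |χ| ∘ φ`. -/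
def IsWeakMorphism (f : P.GeomReal → Q.GeomReal) : Prop :=
  (∀ v : P.cell, P.deg v = 0 →
      ∃ w : Q.cell, Q.deg w = 0 ∧
        f (P.pt v fun _ => half) = Q.pt w fun _ => half) ∧
  ∀ (n : ℕ) (k : Fin n → ℕ), (∀ i, 1 ≤ k i) →
    ∀ ξ : PrecubicalHom (BoxData k) P,
      ∃ (l : Fin n → ℕ), (∀ i, 1 ≤ l i) ∧
        ∃ (χ : PrecubicalHom (BoxData l) Q)
          (φ : (∀ i, Set.Icc (0:ℝ) (k i : ℝ)) ≃ₜ (∀ i, Set.Icc (0:ℝ) (l i : ℝ))),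
          (∀ s t, s ≤ t ↔ φ s ≤ φ t) ∧
          ∀ t, f (realBox ξ t) = realBox χ (φ t)

/-- `p ∈ P` is the carrier of `a ∈ Q` with respect to `f : |P| → |Q|`: there is
`u` in the open cube with `f([p,u]) = [a,(½,…,½)]`.  (For a weak morphism that
is a homeomorphism, the carrier of `a` exists and is unique.) -/
def IsCarrier (f : P.GeomReal → Q.GeomReal) (p : P.cell) (a : Q.cell) : Prop :=
  ∃ u : Fin (P.deg p) → unitInterval,
    (∀ j, (u j : ℝ) ∈ Set.Ioo (0:ℝ) 1) ∧
    f (P.pt p u) = Q.pt a fun _ => half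

/-- The precubical subset `x♯(⟦0,1⟧^{⊗ deg x})` generated by a cube `x`:
all iterated faces of `x`. -/
def gen (P : PrecubicalSet) (x : P.cell) : Set P.cell :=
  {y | Relation.ReflTransGen
    (fun a c => ∃ (b : Bool) (i : ℕ), 1 ≤ i ∧ i ≤ P.deg c ∧ a = P.d b i c) y x}

/-- The subset `|X| ⊆ |P|` determined by a precubical subset `X ⊆ P`. -/
def geomSet (P : PrecubicalSet) (X : Set P.cell) : Set P.GeomReal :=
  {z | ∃ x ∈ X, ∃ u, z = P.pt x u}

/-- The carrier `c(A) = ⋃_{a ∈ A} c(a)♯(⟦0,1⟧^{⊗ deg c(a)})` of a precubical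
subset `A ⊆ Q`, where `c` is the carrier function of `f`. -/
def carrierSet (c : Q.cell → P.cell) (A : Set Q.cell) : Set P.cell :=
  {p | ∃ a ∈ A, p ∈ P.gen (c a)}

/-- `z` is a top cube of `S`: `z ∈ S` and `z` is not a proper iterated face of
any element of `S`. -/
def TopCube (P : PrecubicalSet) (S : Set P.cell) (z : P.cell) : Prop :=
  z ∈ S ∧ ∀ x ∈ S, P.deg z < P.deg x → z ∉ P.gen x

/-- An `n`-cube `x ∈ P` is broken in the precubical subset `A ⊆ Q` (with
respect to `f` with carrier function `c`): `x ∈ c(A)` and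
`f(x♯(⟦0,1⟧^{⊗n})) ⊄ A` (on geometric realisations). -/
def Broken (f : P.GeomReal → Q.GeomReal) (c : Q.cell → P.cell)
    (A : Set Q.cell) (x : P.cell) : Prop :=
  x ∈ carrierSet c A ∧ ¬ (f '' P.geomSet (P.gen x) ⊆ Q.geomSet A)

end PrecubicalSet

/-! ### Auxiliary development -/

namespace PrecubicalSet

/-- The boundary value `0` or `1`. -/
def bval (b : Bool) : unitInterval := if b then 1 else 0

/-- Extension of a tuple `Fin m → [0,1]` to a junk-padded function `ℕ → [0,1]`. -/
def vA {m : ℕ} (u : Fin m → unitInterval) : ℕ → unitInterval :=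
  fun j => if h : j < m then u ⟨j, h⟩ else 0

/-- `insCoord` on junk-padded functions. -/
def insV (b : Bool) (i : ℕ) (g : ℕ → unitInterval) : ℕ → unitInterval :=
  fun p => if p + 1 < i then g p else if p + 1 = i then bval b else g (p - 1)

lemma bval_inj {b₁ b₂ : Bool} (h : bval b₁ = bval b₂) : b₁ = b₂ := by
  cases b₁ <;> cases b₂ <;> first
    | rfl
    | · exfalso
        have := congrArg Subtype.val h
        simp [bval] at this <;> norm_num at this

lemma bval_coe (b : Bool) : ((bval b : unitInterval) : ℝ) = if b then 1 else 0 := by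
  cases b <;> simp [bval]

lemma insCoord_eq_insV {m} (b : Bool) (i : ℕ) (u : Fin m → unitInterval)
    (p : Fin (m + 1)) : insCoord b i u p = insV b i (vA u) p := rfl

lemma vA_eq_zero {m} (u : Fin m → unitInterval) {j : ℕ} (h : m ≤ j) : vA u j = 0 :=
  dif_neg (by omega)

lemma vA_insCoord {m} (b : Bool) {i : ℕ} (hi : 1 ≤ i) (him : i ≤ m + 1)
    (u : Fin m → unitInterval) : vA (insCoord b i u) = insV b i (vA u) := by
  funext p
  by_cases hp : p < m + 1
  · have : vA (insCoord b i u) p = insCoord b i u ⟨p, hp⟩ := dif_pos hp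
    rw [this, insCoord_eq_insV]
  · rw [vA_eq_zero _ (by omega)]
    have h1 : ¬ (p + 1 < i) := by omega
    have h2 : ¬ (p + 1 = i) := by omega
    rw [insV, if_neg h1, if_neg h2, vA_eq_zero _ (by omega)]

lemma heq_iff_vA {m m'} (h : m = m') (u : Fin m → unitInterval)
    (u' : Fin m' → unitInterval) : HEq u u' ↔ vA u = vA u' := by
  subst h
  rw [heq_iff_eq]
  constructor
  · rintro rfl; rfl
  · intro hv
    funext q
    have := congrFun hv q
    simpa [vA, q.isLt] using this

lemma insV_inj {b₁ b₂ : Bool} {i : ℕ} (hi : 1 ≤ i) {g₁ g₂ : ℕ → unitInterval}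
    (h : insV b₁ i g₁ = insV b₂ i g₂) : b₁ = b₂ ∧ g₁ = g₂ := by
  have hb : bval b₁ = bval b₂ := by
    have := congrFun h (i - 1)
    simpa [insV, show ¬ (i - 1 + 1 < i) by omega, show i - 1 + 1 = i by omega]
      using this
  refine ⟨bval_inj hb, ?_⟩
  funext p
  by_cases hp : p + 1 < i
  · have := congrFun h p
    simpa [insV, hp] using this
  · have := congrFun h (p + 1)
    simpa [insV, show ¬ (p + 1 + 1 < i) by omega, show ¬ (p + 1 + 1 = i) by omega]
      using this

/-- Deleting the coordinate at position `i`. -/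
def delV (i : ℕ) (g : ℕ → unitInterval) : ℕ → unitInterval :=
  fun p => if p + 1 < i then g p else g (p + 1)

lemma insV_exchange {b₁ b₂ : Bool} {i j : ℕ} (hi : 1 ≤ i) (hij : i < j)
    {g₁ g₂ : ℕ → unitInterval} (h : insV b₁ i g₁ = insV b₂ j g₂) :
    g₂ = insV b₁ i (delV i g₂) ∧ g₁ = insV b₂ (j - 1) (delV i g₂) := by
  have f0 : bval b₁ = g₂ (i - 1) := by
    have := congrFun h (i - 1)
    simp only [insV] at this
    rwa [if_neg (by omega), if_pos (by omega), if_pos (by omega)] at this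
  have f1 : ∀ p, p + 1 < i → g₁ p = g₂ p := by
    intro p hp
    have := congrFun h p
    simpa [insV, hp, show p + 1 < j by omega] using this
  have f2 : ∀ p, i ≤ p + 1 → p + 2 < j → g₁ p = g₂ (p + 1) := by
    intro p hp hq
    have := congrFun h (p + 1)
    simpa [insV, show ¬ (p + 1 + 1 < i) by omega, show ¬ (p + 1 + 1 = i) by omega,
      show p + 1 + 1 < j by omega] using this
  have f3 : ∀ p, p + 2 = j → g₁ p = bval b₂ := by
    intro p hp
    have := congrFun h (p + 1)
    simp only [insV] at this
    rwa [if_neg (by omega), if_neg (by omega), if_neg (by omega),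
      if_pos (by omega), show p + 1 - 1 = p by omega] at this
  have f4 : ∀ p, j < p + 2 → g₁ p = g₂ p := by
    intro p hp
    have := congrFun h (p + 1)
    simpa [insV, show ¬ (p + 1 + 1 < i) by omega, show ¬ (p + 1 + 1 = i) by omega,
      show ¬ (p + 1 + 1 < j) by omega, show ¬ (p + 1 + 1 = j) by omega] using this
  constructor
  · funext p
    rcases lt_trichotomy (p + 1) i with hp | hp | hp
    · simp only [insV, delV]
      rw [if_pos hp, if_pos hp]
    · simp only [insV, delV]
      rw [if_neg (by omega), if_pos hp]
      exact (f0.trans (by rw [show i - 1 = p by omega])).symm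
    · simp only [insV, delV]
      rw [if_neg (by omega), if_neg (by omega), if_neg (by omega),
        show p - 1 + 1 = p by omega]
  · funext p
    rcases lt_trichotomy (p + 1) (j - 1) with hp | hp | hp
    · rw [insV, if_pos hp]
      by_cases hpi : p + 1 < i
      · rw [delV, if_pos hpi]; exact f1 p hpi
      · rw [delV, if_neg hpi]; exact f2 p (by omega) (by omega)
    · rw [insV, if_neg (by omega), if_pos (by omega)]
      exact f3 p (by omega)
    · rw [insV, if_neg (by omega), if_neg (by omega), delV,
        if_neg (by omega), show p - 1 + 1 = p by omega]
      exact f4 p (by omega)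

lemma vA_of_fun {m : ℕ} (g : ℕ → unitInterval) (hg : ∀ p, m ≤ p → g p = 0) :
    vA (fun q : Fin m => g q) = g := by
  funext p
  by_cases hp : p < m
  · exact dif_pos hp
  · rw [vA_eq_zero _ (by omega), hg p (by omega)]

variable {R : PrecubicalSet}

/-- The descent relation on `⨿ₙ Pₙ × [0,1]ⁿ`: `Dstep z a` iff `a` is obtained
from `z` by deleting a boundary coordinate, i.e. `RelE a z`. -/
def Dstep (R : PrecubicalSet) : R.ESpace → R.ESpace → Prop := fun z a => R.RelE a z

lemma dstep_vA (hR : R.IsPrecubical) {z a : R.ESpace} (h : Dstep R z a) :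
    ∃ (b : Bool) (i : ℕ), 1 ≤ i ∧ i ≤ R.deg z.1 ∧ a.1 = R.d b i z.1 ∧
      R.deg a.1 + 1 = R.deg z.1 ∧ insV b i (vA a.2) = vA z.2 := by
  obtain ⟨b, i, h1, h2, h3, h4⟩ := h
  have hdeg : R.deg a.1 + 1 = R.deg z.1 := by
    rw [h3, hR.1 b i z.1 h1 h2]; omega
  refine ⟨b, i, h1, h2, h3, hdeg, ?_⟩
  have hv := (heq_iff_vA hdeg (insCoord b i a.2) z.2).mp h4
  rw [← hv, vA_insCoord b h1 (by omega)]

lemma vA_dstep (hR : R.IsPrecubical) {z : R.ESpace} {x : R.cell}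
    {u2 : Fin (R.deg x) → unitInterval} {b : Bool} {i : ℕ}
    (h1 : 1 ≤ i) (h2 : i ≤ R.deg z.1) (h3 : x = R.d b i z.1)
    (h5 : insV b i (vA u2) = vA z.2) : Dstep R z ⟨x, u2⟩ := by
  have hdeg : R.deg x + 1 = R.deg z.1 := by
    rw [h3, hR.1 b i z.1 h1 h2]; omega
  refine ⟨b, i, h1, h2, h3, ?_⟩
  rw [heq_iff_vA hdeg (insCoord b i u2) z.2, vA_insCoord b h1 (by omega)]
  exact h5

lemma diamond_lt (hR : R.IsPrecubical) {z s₁ s₂ : R.ESpace}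
    {b₁ b₂ : Bool} {i j : ℕ} (hi1 : 1 ≤ i) (hij : i < j) (hj2 : j ≤ R.deg z.1)
    (he1 : s₁.1 = R.d b₁ i z.1) (hd1 : R.deg s₁.1 + 1 = R.deg z.1)
    (hv1 : insV b₁ i (vA s₁.2) = vA z.2)
    (he2 : s₂.1 = R.d b₂ j z.1) (hd2 : R.deg s₂.1 + 1 = R.deg z.1)
    (hv2 : insV b₂ j (vA s₂.2) = vA z.2) :
    ∃ t, Dstep R s₁ t ∧ Dstep R s₂ t := by
  set n := R.deg z.1 with hn
  obtain ⟨hg2, hg1⟩ := insV_exchange hi1 hij (hv1.trans hv2.symm)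
  set gv := delV i (vA s₂.2) with hgv
  have hcell : R.d b₁ i s₂.1 = R.d b₂ (j - 1) s₁.1 := by
    rw [he1, he2, hR.2 b₁ b₂ i j z.1 hi1 hij hj2]
  have hdt : R.deg (R.d b₂ (j - 1) s₁.1) = n - 2 := by
    rw [hR.1 b₂ (j - 1) s₁.1 (by omega) (by omega)]; omega
  have hsupp : ∀ p, n - 2 ≤ p → gv p = 0 := by
    intro p hp
    rw [hgv, delV]
    split
    · rename_i hlt
      exact absurd hlt (by omega)
    · exact vA_eq_zero _ (by omega)
  have hvt : vA (fun q : Fin (R.deg (R.d b₂ (j - 1) s₁.1)) => gv q) = gv := by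
    rw [hdt] at *
    exact vA_of_fun gv hsupp
  refine ⟨⟨R.d b₂ (j - 1) s₁.1, fun q => gv q⟩, ?_, ?_⟩
  · exact vA_dstep hR (by omega) (by omega) rfl (by rw [hvt]; exact hg1.symm)
  · exact vA_dstep hR hi1 (by omega) hcell.symm (by rw [hvt]; exact hg2.symm)

lemma diamond (hR : R.IsPrecubical) {z s₁ s₂ : R.ESpace}
    (h₁ : Dstep R z s₁) (h₂ : Dstep R z s₂) :
    s₁ = s₂ ∨ ∃ t, Dstep R s₁ t ∧ Dstep R s₂ t := by
  obtain ⟨b₁, i, hi1, hi2, he1, hd1, hv1⟩ := dstep_vA hR h₁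
  obtain ⟨b₂, j, hj1, hj2, he2, hd2, hv2⟩ := dstep_vA hR h₂
  rcases lt_trichotomy i j with hij | rfl | hij
  · exact Or.inr (diamond_lt hR hi1 hij hj2 he1 hd1 hv1 he2 hd2 hv2)
  · left
    obtain ⟨hb, hg⟩ := insV_inj hi1 (hv1.trans hv2.symm)
    subst hb
    have hfst : s₁.1 = s₂.1 := by rw [he1, he2]
    exact Sigma.ext hfst ((heq_iff_vA (by rw [hfst]) _ _).mpr hg)
  · obtain ⟨t, ht2, ht1⟩ := diamond_lt hR hj1 hij hi2 he2 hd2 hv2 he1 hd1 hv1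
    exact Or.inr ⟨t, ht1, ht2⟩

lemma no_step_interior (hR : R.IsPrecubical) {y : R.cell}
    {w : Fin (R.deg y) → unitInterval}
    (hw : ∀ q, (w q : ℝ) ∈ Set.Ioo (0 : ℝ) 1) {s : R.ESpace}
    (h : Dstep R ⟨y, w⟩ s) : False := by
  obtain ⟨b, i, hi1, hi2, _, _, hv⟩ := dstep_vA hR h
  have hlt : i - 1 < R.deg y := by
    simpa using (by omega : i - 1 < R.deg (⟨y, w⟩ : R.ESpace).1)
  have := congrFun hv (i - 1)
  rw [insV, if_neg (by omega), if_pos (by omega)] at this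
  have hwv : vA w (i - 1) = w ⟨i - 1, hlt⟩ := dif_pos hlt
  have hbw : bval b = w ⟨i - 1, hlt⟩ := by
    rw [← hwv]; exact this
  have := hw ⟨i - 1, hlt⟩
  rw [← hbw, bval_coe] at this
  cases b <;> simp at this <;> linarith [this.1, this.2]

lemma confluence (hR : R.IsPrecubical) {y : R.cell}
    {w : Fin (R.deg y) → unitInterval}
    (hw : ∀ q, (w q : ℝ) ∈ Set.Ioo (0 : ℝ) 1) :
    ∀ {t : R.ESpace}, Relation.ReflTransGen (Dstep R) t ⟨y, w⟩ →
      ∀ {s}, Dstep R t s → Relation.ReflTransGen (Dstep R) s ⟨y, w⟩ := by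
  intro t ht
  induction ht using Relation.ReflTransGen.head_induction_on with
  | refl => exact fun {s} hs => absurd hs (fun h => no_step_interior hR hw h)
  | head h' hrt ih =>
      intro s hs
      rcases diamond hR hs h' with h | ⟨t₂, ha, hb⟩
      · exact h ▸ hrt
      · exact Relation.ReflTransGen.head ha (ih hb)

lemma gen_subset {X : Set R.cell} (hX : R.IsSub X) {x : R.cell} (hx : x ∈ X) :
    R.gen x ⊆ X := by
  intro y hy
  simp only [gen, Set.mem_setOf_eq] at hy
  induction hy using Relation.ReflTransGen.head_induction_on with
  | refl => exact hx
  | head h' _ ih =>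
      obtain ⟨b, i, h1, h2, he⟩ := h'
      exact he ▸ hX b i _ h1 h2 ih

lemma rtg_gen {s t : R.ESpace} (h : Relation.ReflTransGen (Dstep R) s t) :
    t.1 ∈ R.gen s.1 := by
  induction h with
  | refl => exact Relation.ReflTransGen.refl
  | tail _ step ih =>
      obtain ⟨b, i, h1, h2, h3, _⟩ := step
      exact Relation.ReflTransGen.head ⟨b, i, h1, h2, h3⟩ ih

lemma mem_of_pt_eq (hR : R.IsPrecubical) {X : Set R.cell} (hX : R.IsSub X)
    {y x : R.cell} {w : Fin (R.deg y) → unitInterval}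
    {u : Fin (R.deg x) → unitInterval}
    (hw : ∀ q, (w q : ℝ) ∈ Set.Ioo (0 : ℝ) 1)
    (h : R.pt y w = R.pt x u) (hx : x ∈ X) : y ∈ X := by
  have he : Relation.EqvGen R.RelE ⟨y, w⟩ ⟨x, u⟩ := Quot.eq.mp h
  have key : ∀ {s t : R.ESpace}, Relation.EqvGen R.RelE s t →
      (Relation.ReflTransGen (Dstep R) s ⟨y, w⟩ ↔
        Relation.ReflTransGen (Dstep R) t ⟨y, w⟩) := by
    intro s t hst
    induction hst with
    | rel a b hab =>
        exact ⟨fun hp => Relation.ReflTransGen.head hab hp,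
          fun hp => confluence hR hw hp hab⟩
    | refl a => exact Iff.rfl
    | symm a b _ ih => exact ih.symm
    | trans a b c _ _ ih1 ih2 => exact ih1.trans ih2
  have hx' : Relation.ReflTransGen (Dstep R) (⟨x, u⟩ : R.ESpace) ⟨y, w⟩ :=
    (key he).mp Relation.ReflTransGen.refl
  exact gen_subset hX hx (rtg_gen hx')

lemma half_interior : ((half : unitInterval) : ℝ) ∈ Set.Ioo (0 : ℝ) 1 := by
  constructor <;> norm_num [half]

end PrecubicalSet

open PrecubicalSet in
/-- Let `f : |P| → |Q|` be a weak morphism of precubical sets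
that is a homeomorphism, with carrier function `c`, and let `A ⊆ Q` be a
precubical subset. If no element of `c(A)` is broken in `A`, then `A = f(c(A))`
(where the image precubical subset `f(c(A))` is given by `B`, the unique
precubical subset with `f(|c(A)|) = |B|`). -/
theorem eq_image_carrier_of_not_broken (P Q : PrecubicalSet)
    (hP : P.IsPrecubical) (hQ : Q.IsPrecubical)
    (f : P.GeomReal ≃ₜ Q.GeomReal) (hf : IsWeakMorphism (P := P) (Q := Q) f)
    (c : Q.cell → P.cell) (hc : ∀ a, IsCarrier (P := P) (Q := Q) f (c a) a)
    (A : Set Q.cell) (hA : Q.IsSub A)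
    (hnb : ∀ x ∈ carrierSet c A, ¬ Broken (P := P) (Q := Q) f c A x)
    (B : Set Q.cell) (hB : Q.IsSub B)
    (hBim : f '' P.geomSet (carrierSet c A) = Q.geomSet B) :
    A = B := by
  have hhalf : ∀ (k : ℕ) (q : Fin k),
      (((fun _ : Fin k => half) q : unitInterval) : ℝ) ∈ Set.Ioo (0 : ℝ) 1 :=
    fun k q => half_interior
  apply Set.Subset.antisymm
  · -- A ⊆ B
    intro a ha
    obtain ⟨u, hu, hfu⟩ := hc a
    have hmem : Q.pt a (fun _ => half) ∈ Q.geomSet B := by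
      rw [← hBim]
      exact ⟨P.pt (c a) u,
        ⟨c a, ⟨a, ha, Relation.ReflTransGen.refl⟩, u, rfl⟩, hfu⟩
    obtain ⟨b, hbB, u', hpt⟩ := hmem
    exact mem_of_pt_eq hQ hB (hhalf _) hpt hbB
  · -- B ⊆ A
    intro b hb
    have hmem : Q.pt b (fun _ => half) ∈ Q.geomSet B :=
      ⟨b, hb, fun _ => half, rfl⟩
    rw [← hBim] at hmem
    obtain ⟨zp, hz, hfz⟩ := hmem
    obtain ⟨p, ⟨a₀, ha₀, hpgen⟩, u₀, rfl⟩ := hz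
    have hca : c a₀ ∈ carrierSet c A := ⟨a₀, ha₀, Relation.ReflTransGen.refl⟩
    have hsub : ⇑f '' P.geomSet (P.gen (c a₀)) ⊆ Q.geomSet A := by
      by_contra hcon
      exact hnb (c a₀) hca ⟨hca, hcon⟩
    have hAm : Q.pt b (fun _ => half) ∈ Q.geomSet A := by
      rw [← hfz]
      exact hsub ⟨P.pt p u₀, ⟨p, hpgen, u₀, rfl⟩, rfl⟩
    obtain ⟨a, haA, u', hpt⟩ := hAm
    exact mem_of_pt_eq hQ hA (hhalf _) hpt haA
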